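/- Reduction of MINT to influence minimization: let Q be a finite set disjoint from V with a bijection φ : P → Q, and define the augmented graph on vertex set V ∪ Q with edge set E' = E ∪ {(φ(p), p) : p ∈ P}. Then for every realization H ⊆ E and every S ⊆ P, letting H' = H ∪ {(φ(p), p) : p ∈ P}, the number of nodes u ∈ V ∪ Q that are reachable (via a directed path of length ≥ 0 using only edges of H' and only vertices in (V ∪ Q) \ S) from some node of Q equals f_H(S) + 2|P| − |S|. In particular, for any fixed k, minimizing the augmented-graph objective over S ⊆ P with |S| = k is equivalent to minimizing f_H(S) (and, taking the Pr-weighted sum over H ⊆ E, to minimizing F(S)) over the same family. -/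

import Mathlib

open Finset

/-- A single transmission step along a live edge of `H`, avoiding the removed vertex set `S`. -/
def MintStep {α : Type*} (H : Finset (α × α)) (S : Finset α) (x y : α) : Prop :=
  (x, y) ∈ H ∧ x ∉ S ∧ y ∉ S

/-- `u` is reachable from `v` in `H[V \ S]`: there is a directed path (possibly of length 0)
from `v` to `u` using only edges of `H`, all of whose vertices avoid `S`. -/
def MintReach {α : Type*} (H : Finset (α × α)) (S : Finset α) (v u : α) : Prop :=
  v ∉ S ∧ Relation.ReflTransGen (MintStep H S) v u

/-- The realized MINT objective `f_H(S)`: the number of negative nodes (nodes outside `P`)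
reachable from some untreated positive node (a node of `P \ S`) in `H[V \ S]`. -/
noncomputable def mintf {α : Type*} [DecidableEq α] (P : Finset α) (H : Finset (α × α))
    (S : Finset α) : ℕ :=
  Set.ncard {u : α | u ∉ P ∧ ∃ v ∈ P \ S, MintReach H S v u}

/-- The probability of the live-edge realization `H ⊆ E`. -/
def mintPr {α : Type*} [DecidableEq α] (E : Finset (α × α)) (w : α × α → ℝ)
    (H : Finset (α × α)) : ℝ :=
  (∏ e ∈ H, w e) * ∏ e ∈ E \ H, (1 - w e)

/-- The expected MINT objective `F(S) = Σ_{H ⊆ E} Pr(H) · f_H(S)`. -/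
noncomputable def mintF {α : Type*} [DecidableEq α] (E : Finset (α × α)) (w : α × α → ℝ)
    (P : Finset α) (S : Finset α) : ℝ :=
  ∑ H ∈ E.powerset, mintPr E w H * (mintf P H S : ℝ)


/-- The augmented edge set `H' = H ∪ {(φ(p), p) : p ∈ P}` on vertex set `V ⊕ Q`. -/
def mintAugEdges {α γ : Type*} [DecidableEq α] [DecidableEq γ] (P : Finset α)
    (φ : {x // x ∈ P} ≃ γ) (H : Finset (α × α)) : Finset ((α ⊕ γ) × (α ⊕ γ)) :=
  H.image (fun e => (Sum.inl e.1, Sum.inl e.2)) ∪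
    P.attach.image fun p => (Sum.inr (φ p), Sum.inl p.val)

/-- The influence-minimization objective on the augmented graph: the number of vertices of
`V ⊕ Q` reachable from some initially active node of `Q` after removing `S`. -/
noncomputable def mintAug {α γ : Type*} [DecidableEq α] [DecidableEq γ] (P : Finset α)
    (φ : {x // x ∈ P} ≃ γ) (H : Finset (α × α)) (S : Finset α) : ℕ :=
  Set.ncard {u : α ⊕ γ | ∃ q : γ, MintReach (mintAugEdges P φ H) (S.image Sum.inl) (Sum.inr q) u}

section Aux
variable {α γ : Type*} [DecidableEq α] [DecidableEq γ]
variable {P : Finset α} {φ : {x // x ∈ P} ≃ γ} {H : Finset (α × α)} {S : Finset α}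

lemma aug_step_inl {x : α} {z : α ⊕ γ} :
    MintStep (mintAugEdges P φ H) (S.image Sum.inl) (Sum.inl x) z ↔
      ∃ y, z = Sum.inl y ∧ MintStep H S x y := by
  constructor
  · rintro ⟨he, hx, hz⟩
    simp only [mintAugEdges, mem_union, mem_image, mem_attach, true_and, Prod.ext_iff] at he
    rcases he with ⟨e, heH, h1, h2⟩ | ⟨p, h1, h2⟩
    · refine ⟨e.2, h2.symm, ?_, ?_, ?_⟩
      · obtain rfl : e.1 = x := Sum.inl.inj h1
        simpa using heH
      · simpa using hx
      · intro hy
        exact hz (by simp [← h2, hy])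
    · exact absurd h1.symm (by simp)
  · rintro ⟨y, rfl, he, hx, hy⟩
    exact ⟨by simp only [mintAugEdges, mem_union, mem_image]; exact Or.inl ⟨(x,y), he, rfl⟩,
      by simpa using hx, by simpa using hy⟩

lemma aug_step_inr {q : γ} {z : α ⊕ γ} :
    MintStep (mintAugEdges P φ H) (S.image Sum.inl) (Sum.inr q) z ↔
      z = Sum.inl (φ.symm q).val ∧ (φ.symm q).val ∉ S := by
  constructor
  · rintro ⟨he, hx, hz⟩
    simp only [mintAugEdges, mem_union, mem_image, mem_attach, true_and, Prod.ext_iff] at he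
    rcases he with ⟨e, heH, h1, h2⟩ | ⟨p, h1, h2⟩
    · exact absurd h1.symm (by simp)
    · obtain rfl : q = φ p := Sum.inr.inj h1.symm
      rw [Equiv.symm_apply_apply]
      exact ⟨h2.symm, fun hy => hz (by simp [← h2, hy])⟩
  · rintro ⟨rfl, hy⟩
    refine ⟨?_, by simp, by simpa using hy⟩
    simp only [mintAugEdges, mem_union, mem_image, mem_attach, true_and]
    exact Or.inr ⟨φ.symm q, by simp⟩

lemma aug_reach_inl {x : α} {z : α ⊕ γ}
    (h : Relation.ReflTransGen (MintStep (mintAugEdges P φ H) (S.image Sum.inl))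
      (Sum.inl x) z) : ∃ y, z = Sum.inl y ∧ Relation.ReflTransGen (MintStep H S) x y := by
  induction h with
  | refl => exact ⟨x, rfl, .refl⟩
  | tail _ hstep ih =>
      obtain ⟨y, rfl, hr⟩ := ih
      obtain ⟨y', rfl, hs⟩ := aug_step_inl.mp hstep
      exact ⟨y', rfl, hr.tail hs⟩

lemma aug_reach_inl' {x y : α} (h : Relation.ReflTransGen (MintStep H S) x y) :
    Relation.ReflTransGen (MintStep (mintAugEdges P φ H) (S.image Sum.inl))
      (Sum.inl x) (Sum.inl y) := by
  induction h with
  | refl => exact .refl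
  | tail _ hstep ih => exact ih.tail (aug_step_inl.mpr ⟨_, rfl, hstep⟩)

lemma aug_set_eq :
    {u : α ⊕ γ | ∃ q : γ, MintReach (mintAugEdges P φ H) (S.image Sum.inl) (Sum.inr q) u} =
      Set.range (Sum.inr : γ → α ⊕ γ) ∪
        Sum.inl '' {u : α | ∃ p ∈ P \ S, MintReach H S p u} := by
  ext u
  constructor
  · rintro ⟨q, -, hr⟩
    rcases hr.cases_head with rfl | ⟨c, hstep, hr'⟩
    · exact Or.inl ⟨q, rfl⟩
    · obtain ⟨rfl, hns⟩ := aug_step_inr.mp hstep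
      obtain ⟨y, rfl, hr''⟩ := aug_reach_inl hr'
      exact Or.inr ⟨y, ⟨(φ.symm q).val, by simp [hns, (φ.symm q).2], hns, hr''⟩, rfl⟩
  · rintro (⟨q, rfl⟩ | ⟨y, ⟨p, hp, hns, hr⟩, rfl⟩)
    · exact ⟨q, by simp, .refl⟩
    · refine ⟨φ ⟨p, (mem_sdiff.mp hp).1⟩, by simp, ?_⟩
      refine Relation.ReflTransGen.head (aug_step_inr.mpr ?_) (aug_reach_inl' hr)
      simp [hns]

lemma inner_set_eq (hinc : ∀ e ∈ H, e.2 ∉ P) :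
    {u : α | ∃ p ∈ P \ S, MintReach H S p u} =
      ↑(P \ S) ∪ {u : α | u ∉ P ∧ ∃ v ∈ P \ S, MintReach H S v u} := by
  ext u
  constructor
  · rintro ⟨p, hp, hns, hr⟩
    by_cases hu : u ∈ P
    · left
      rcases hr.cases_tail with rfl | ⟨b, _, hstep⟩
      · exact hp
      · exact absurd hu (hinc _ hstep.1)
    · exact Or.inr ⟨hu, p, hp, hns, hr⟩
  · rintro (hu | ⟨-, p, hp, hr⟩)
    · exact ⟨u, hu, (mem_sdiff.mp hu).2, .refl⟩
    · exact ⟨p, hp, hr⟩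

end Aux

lemma aug_card {α γ : Type*} [Fintype α] [DecidableEq α] [Fintype γ] [DecidableEq γ]
    {P : Finset α} (φ : {x // x ∈ P} ≃ γ) {H : Finset (α × α)} {S : Finset α}
    (hinc : ∀ e ∈ H, e.2 ∉ P) (hS : S ⊆ P) :
    mintAug P φ H S = mintf P H S + 2 * P.card - S.card := by
  have hcardγ : Fintype.card γ = P.card := by
    rw [← Fintype.card_coe P]; exact (Fintype.card_congr φ).symm
  unfold mintAug
  rw [aug_set_eq, Set.ncard_union_eq (by
      rw [Set.disjoint_left]; rintro _ ⟨q, rfl⟩ ⟨y, -, h⟩; exact absurd h (by simp))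
      (Set.toFinite _) (Set.toFinite _),
    Set.ncard_image_of_injective _ Sum.inl_injective, inner_set_eq hinc,
    Set.ncard_union_eq (by
      rw [Set.disjoint_left]; rintro u hu ⟨hnu, -⟩
      exact hnu (mem_sdiff.mp (by exact_mod_cast hu)).1)
      (Set.toFinite _) (Set.toFinite _),
    Set.ncard_coe_finset, card_sdiff_of_subset hS]
  have h1 : Set.ncard (Set.range (Sum.inr : γ → α ⊕ γ)) = P.card := by
    rw [← Set.image_univ, Set.ncard_image_of_injective _ Sum.inr_injective,
      Set.ncard_univ, Nat.card_eq_fintype_card, hcardγ]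
  rw [h1]
  have hsp : S.card ≤ P.card := card_le_card hS
  unfold mintf
  omega

/-- Reduction of MINT to influence minimization on the augmented graph: for every
realization `H ⊆ E` and every `S ⊆ P`, the augmented objective equals
`f_H(S) + 2|P| - |S|`; in particular, for any fixed budget `k`, minimizing the
augmented-graph objective over `S ⊆ P` with `|S| = k` is equivalent to minimizing
`f_H(S)`, and (taking `Pr`-weighted sums over `H ⊆ E`) to minimizing `F(S)`. -/
theorem stmt13 {α γ : Type*} [Fintype α] [DecidableEq α] [Fintype γ] [DecidableEq γ]
    (E : Finset (α × α)) (w : α × α → ℝ) (hw : ∀ e ∈ E, 0 ≤ w e ∧ w e ≤ 1)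
    (P : Finset α) (hinc : ∀ e ∈ E, e.2 ∉ P)
    (φ : {x // x ∈ P} ≃ γ) :
    (∀ H ⊆ E, ∀ S ⊆ P, mintAug P φ H S = mintf P H S + 2 * P.card - S.card) ∧
    (∀ k : ℕ, ∀ S₁ ⊆ P, ∀ S₂ ⊆ P, S₁.card = k → S₂.card = k →
      (∀ H ⊆ E, (mintAug P φ H S₁ ≤ mintAug P φ H S₂ ↔ mintf P H S₁ ≤ mintf P H S₂)) ∧
      ((∑ H ∈ E.powerset, mintPr E w H * (mintAug P φ H S₁ : ℝ)) ≤
          (∑ H ∈ E.powerset, mintPr E w H * (mintAug P φ H S₂ : ℝ)) ↔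
        mintF E w P S₁ ≤ mintF E w P S₂)) := by
  have main : ∀ H ⊆ E, ∀ S ⊆ P, mintAug P φ H S = mintf P H S + 2 * P.card - S.card :=
    fun H hH S hS => aug_card φ (fun e he => hinc e (hH he)) hS
  refine ⟨main, ?_⟩
  intro k S₁ hS₁ S₂ hS₂ hk₁ hk₂
  have hp₁ : S₁.card ≤ P.card := card_le_card hS₁
  constructor
  · intro H hH
    have e1 := main H hH S₁ hS₁
    have e2 := main H hH S₂ hS₂
    omega
  · have key : ∀ S ⊆ P, S.card = k →
        (∑ H ∈ E.powerset, mintPr E w H * (mintAug P φ H S : ℝ)) =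
          mintF E w P S + ((2 * P.card : ℝ) - k) * ∑ H ∈ E.powerset, mintPr E w H := by
      intro S hS hkS
      have hsp : S.card ≤ P.card := card_le_card hS
      rw [mintF, Finset.mul_sum, ← Finset.sum_add_distrib]
      refine Finset.sum_congr rfl fun H hH => ?_
      have e := main H (mem_powerset.mp hH) S hS
      have hle : S.card ≤ mintf P H S + 2 * P.card := by omega
      rw [e, Nat.cast_sub hle, hkS]
      push_cast
      ring
    rw [key S₁ hS₁ hk₁, key S₂ hS₂ hk₂]
    exact add_le_add_iff_right _
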